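/- Let μ and ν be probability measures on ℝ with finite first moments, let π be a martingale coupling of μ and ν, and suppose K₁ ≤ K₂. Then for every Borel set B ⊆ ℝ the American-put payoff satisfies A(π,B) ≤ P_ν(K₂), and A(π,∅) = P_ν(K₂); hence the supremum over all martingale couplings and all Borel sets of the payoff equals P_ν(K₂). -/

import Mathlib

open MeasureTheory Set

/-- The put price function `P_η(k) = ∫ (k-x)⁺ dη(x)`. -/
noncomputable def putPrice (η : Measure ℝ) (k : ℝ) : ℝ := ∫ x, max (k - x) 0 ∂η

/-- `π` is a martingale coupling of `μ` and `ν`. -/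
def IsMartingaleCoupling (μ ν : Measure ℝ) (π : Measure (ℝ × ℝ)) : Prop :=
  IsProbabilityMeasure π ∧ π.map Prod.fst = μ ∧ π.map Prod.snd = ν ∧
    ∀ B : Set ℝ, MeasurableSet B →
      ∫ p in B ×ˢ (Set.univ : Set ℝ), p.2 ∂π = ∫ x in B, x ∂μ

/-- The American-put payoff under coupling `π` and exercise set `B`. -/
noncomputable def amPayoff (K₁ K₂ : ℝ) (π : Measure (ℝ × ℝ)) (B : Set ℝ) : ℝ :=
  ∫ p, (B.indicator (fun x => max (K₁ - x) 0) p.1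
      + Bᶜ.indicator (fun _ => max (K₂ - p.2) 0) p.1) ∂π

lemma snd_integrable {ν : Measure ℝ} (π : Measure (ℝ × ℝ))
    (hsnd : π.map Prod.snd = ν) (hνint : Integrable (fun y => y) ν) :
    Integrable (fun p : ℝ × ℝ => p.2) π := by
  rw [← hsnd] at hνint
  exact (integrable_map_measure aestronglyMeasurable_id
    measurable_snd.aemeasurable).mp hνint

lemma fst_integrable {μ : Measure ℝ} (π : Measure (ℝ × ℝ))
    (hfst : π.map Prod.fst = μ) (hμint : Integrable (fun x => x) μ) :
    Integrable (fun p : ℝ × ℝ => p.1) π := by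
  rw [← hfst] at hμint
  exact (integrable_map_measure aestronglyMeasurable_id
    measurable_fst.aemeasurable).mp hμint

lemma put_integrable_of {α : Type*} [MeasurableSpace α] {π : Measure α}
    [IsFiniteMeasure π] {f : α → ℝ} (hf : Integrable f π) (hfm : Measurable f) (K : ℝ) :
    Integrable (fun p => max (K - f p) 0) π := by
  have hbig : Integrable (fun p => |K| + |f p|) π := (integrable_const _).add hf.abs
  refine hbig.mono ?_ (ae_of_all _ fun p => ?_)
  · exact ((measurable_const.sub hfm).max measurable_const).aestronglyMeasurable
  · simp only [Real.norm_eq_abs]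
    have h1 : |max (K - f p) 0| = max (K - f p) 0 := abs_of_nonneg (le_max_right _ _)
    rw [h1, abs_of_nonneg (by positivity : (0:ℝ) ≤ |K| + |f p|)]
    have := le_abs_self K
    have := neg_abs_le (f p)
    have := abs_nonneg (f p)
    have := abs_nonneg K
    refine max_le (by linarith) (by positivity)

/-- Main bound: payoff at most the European put price. -/
lemma amPayoff_le_putPrice (μ ν : Measure ℝ)
    (hμint : Integrable (fun x => x) μ) (hνint : Integrable (fun y => y) ν)
    (K₁ K₂ : ℝ) (hK : K₁ ≤ K₂)
    (π : Measure (ℝ × ℝ)) (hπ : IsMartingaleCoupling μ ν π)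
    (B : Set ℝ) (hB : MeasurableSet B) :
    amPayoff K₁ K₂ π B ≤ putPrice ν K₂ := by
  obtain ⟨hprob, hfst, hsnd, hmart⟩ := hπ
  haveI : IsProbabilityMeasure π := hprob
  set g : ℝ × ℝ → ℝ := fun p => max (K₂ - p.2) 0 with hg_def
  set h₁ : ℝ × ℝ → ℝ := fun p => max (K₁ - p.1) 0 with hh_def
  have hY : Integrable (fun p : ℝ × ℝ => p.2) π := snd_integrable π hsnd hνint
  have hX : Integrable (fun p : ℝ × ℝ => p.1) π := fst_integrable π hfst hμint
  have hg_int : Integrable g π := put_integrable_of hY measurable_snd K₂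
  have hh_int : Integrable h₁ π := put_integrable_of hX measurable_fst K₁
  have hsB : MeasurableSet (B ×ˢ (univ : Set ℝ)) := hB.prod MeasurableSet.univ
  -- rewrite payoff
  have hrw : amPayoff K₁ K₂ π B
      = (∫ p in B ×ˢ (univ : Set ℝ), h₁ p ∂π)
        + ∫ p in Bᶜ ×ˢ (univ : Set ℝ), g p ∂π := by
    unfold amPayoff
    have e1 : ∀ p : ℝ × ℝ, B.indicator (fun x => max (K₁ - x) 0) p.1
        = (B ×ˢ (univ : Set ℝ)).indicator h₁ p := by
      intro p
      by_cases h : p.1 ∈ B <;> simp [indicator, h, hh_def]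
    have e2 : ∀ p : ℝ × ℝ, Bᶜ.indicator (fun _ => max (K₂ - p.2) 0) p.1
        = (Bᶜ ×ˢ (univ : Set ℝ)).indicator g p := by
      intro p
      by_cases h : p.1 ∈ B <;> simp [indicator, h, hg_def]
    simp_rw [e1, e2]
    rw [integral_add (hh_int.indicator hsB)
        (hg_int.indicator (hB.compl.prod MeasurableSet.univ)),
      integral_indicator hsB, integral_indicator (hB.compl.prod MeasurableSet.univ)]
  -- key inequality on B side
  set B' : Set ℝ := B ∩ Iio K₁ with hB'_def
  have hB' : MeasurableSet B' := hB.inter measurableSet_Iio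
  have hsB' : MeasurableSet (B' ×ˢ (univ : Set ℝ)) := hB'.prod MeasurableSet.univ
  have key : (∫ p in B ×ˢ (univ : Set ℝ), h₁ p ∂π)
      ≤ ∫ p in B ×ˢ (univ : Set ℝ), g p ∂π := by
    have ea : (∫ p in B ×ˢ (univ : Set ℝ), h₁ p ∂π)
        = ∫ p in B' ×ˢ (univ : Set ℝ), (K₁ - p.1) ∂π := by
      have e : ∀ p : ℝ × ℝ, h₁ p
          = ((Iio K₁) ×ˢ (univ : Set ℝ)).indicator (fun p : ℝ × ℝ => K₁ - p.1) p := by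
        intro p
        by_cases h : p.1 < K₁
        · simp [hh_def, indicator, h, max_eq_left (by linarith : (0:ℝ) ≤ K₁ - p.1)]
        · simp [hh_def, indicator, h, max_eq_right (by push_neg at h; linarith : K₁ - p.1 ≤ 0)]
      simp_rw [e]
      rw [setIntegral_indicator (measurableSet_Iio.prod MeasurableSet.univ)]
      congr 1
      rw [prod_inter_prod, univ_inter]
    -- martingale step: ∫ p.1 over B'×univ equals ∫ p.2 over B'×univ
    have hfst_eq : (∫ p in B' ×ˢ (univ : Set ℝ), p.1 ∂π) = ∫ x in B', x ∂μ := by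
      rw [← hfst, setIntegral_map hB' measurable_id'.aestronglyMeasurable
        measurable_fst.aemeasurable]
      have : Prod.fst ⁻¹' B' = B' ×ˢ (univ : Set ℝ) := by
        ext p; simp
      rw [this]
    have hXY : (∫ p in B' ×ˢ (univ : Set ℝ), p.1 ∂π)
        = ∫ p in B' ×ˢ (univ : Set ℝ), p.2 ∂π := by
      rw [hfst_eq, hmart B' hB']
    have eb : (∫ p in B' ×ˢ (univ : Set ℝ), (K₁ - p.1) ∂π)
        ≤ ∫ p in B' ×ˢ (univ : Set ℝ), (K₂ - p.2) ∂π := by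
      rw [integral_sub (integrable_const _).restrict hX.restrict,
        integral_sub (integrable_const _).restrict hY.restrict, hXY,
        setIntegral_const, setIntegral_const]
      have : (0:ℝ) ≤ π.real (B' ×ˢ (univ : Set ℝ)) := ENNReal.toReal_nonneg
      have hmul : π.real (B' ×ˢ (univ : Set ℝ)) • K₁
          ≤ π.real (B' ×ˢ (univ : Set ℝ)) • K₂ := by
        simp only [smul_eq_mul]
        nlinarith
      linarith [hmul]
    have ec : (∫ p in B' ×ˢ (univ : Set ℝ), (K₂ - p.2) ∂π)
        ≤ ∫ p in B' ×ˢ (univ : Set ℝ), g p ∂π := by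
      refine integral_mono ((integrable_const _).sub hY).restrict hg_int.restrict
        fun p => le_max_left _ _
    have ed : (∫ p in B' ×ˢ (univ : Set ℝ), g p ∂π)
        ≤ ∫ p in B ×ˢ (univ : Set ℝ), g p ∂π := by
      refine setIntegral_mono_set hg_int.integrableOn
        (ae_of_all _ fun p => le_max_right _ _) (HasSubset.Subset.eventuallyLE ?_)
      exact prod_mono_left inter_subset_left
    linarith [ea, eb, ec, ed, ea ▸ eb]
  -- assemble
  have hcompl : Bᶜ ×ˢ (univ : Set ℝ) = (B ×ˢ (univ : Set ℝ))ᶜ := by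
    ext p; simp [mem_prod]
  have hput : (∫ p, g p ∂π) = putPrice ν K₂ := by
    rw [putPrice, ← hsnd, integral_map measurable_snd.aemeasurable
      (f := fun x : ℝ => max (K₂ - x) 0) ((measurable_const.sub measurable_id').max measurable_const).aestronglyMeasurable]
  calc amPayoff K₁ K₂ π B
      ≤ (∫ p in B ×ˢ (univ : Set ℝ), g p ∂π) + ∫ p in Bᶜ ×ˢ (univ : Set ℝ), g p ∂π := by
        rw [hrw]; linarith [key]
    _ = ∫ p, g p ∂π := by
        rw [hcompl, integral_add_compl hsB hg_int]
    _ = putPrice ν K₂ := hput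

lemma amPayoff_empty (μ ν : Measure ℝ) (hνint : Integrable (fun y => y) ν)
    (K₁ K₂ : ℝ) (π : Measure (ℝ × ℝ)) (hπ : IsMartingaleCoupling μ ν π) :
    amPayoff K₁ K₂ π ∅ = putPrice ν K₂ := by
  obtain ⟨hprob, hfst, hsnd, hmart⟩ := hπ
  have : amPayoff K₁ K₂ π ∅ = ∫ p : ℝ × ℝ, max (K₂ - p.2) 0 ∂π := by
    unfold amPayoff
    simp
  rw [this, putPrice, ← hsnd, integral_map measurable_snd.aemeasurable
    (f := fun x : ℝ => max (K₂ - x) 0) ((measurable_const.sub measurable_id').max measurable_const).aestronglyMeasurable]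

theorem degenerate_case_K1_le_K2
    (μ ν : Measure ℝ) [IsProbabilityMeasure μ] [IsProbabilityMeasure ν]
    (hμint : Integrable (fun x => x) μ) (hνint : Integrable (fun y => y) ν)
    (K₁ K₂ : ℝ) (hK : K₁ ≤ K₂)
    (π : Measure (ℝ × ℝ)) (hπ : IsMartingaleCoupling μ ν π) :
    (∀ B : Set ℝ, MeasurableSet B → amPayoff K₁ K₂ π B ≤ putPrice ν K₂) ∧
    amPayoff K₁ K₂ π ∅ = putPrice ν K₂ ∧
    sSup { r : ℝ | ∃ π' : Measure (ℝ × ℝ), ∃ B : Set ℝ,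
        IsMartingaleCoupling μ ν π' ∧ MeasurableSet B ∧ r = amPayoff K₁ K₂ π' B }
      = putPrice ν K₂ := by
  refine ⟨fun B hB => amPayoff_le_putPrice μ ν hμint hνint K₁ K₂ hK π hπ B hB,
    amPayoff_empty μ ν hνint K₁ K₂ π hπ, ?_⟩
  have hmem : putPrice ν K₂ ∈ { r : ℝ | ∃ π' : Measure (ℝ × ℝ), ∃ B : Set ℝ,
      IsMartingaleCoupling μ ν π' ∧ MeasurableSet B ∧ r = amPayoff K₁ K₂ π' B } :=
    ⟨π, ∅, hπ, MeasurableSet.empty, (amPayoff_empty μ ν hνint K₁ K₂ π hπ).symm⟩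
  have hub : ∀ r ∈ { r : ℝ | ∃ π' : Measure (ℝ × ℝ), ∃ B : Set ℝ,
      IsMartingaleCoupling μ ν π' ∧ MeasurableSet B ∧ r = amPayoff K₁ K₂ π' B },
      r ≤ putPrice ν K₂ := by
    rintro r ⟨π', B, hπ', hB, rfl⟩
    exact amPayoff_le_putPrice μ ν hμint hνint K₁ K₂ hK π' hπ' B hB
  exact le_antisymm (csSup_le ⟨_, hmem⟩ hub) (le_csSup ⟨putPrice ν K₂, hub⟩ hmem)
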